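/- arXiv:2311.14622 — 2 statements merged into one kernel-verified Lean document; each statement's English description precedes it below -/
import Mathlib

section
/- Let n ≥ 1, let ρ be a positive semidefinite 2ⁿ×2ⁿ complex matrix with tr(ρ) = 1, and let O be a Hermitian 2ⁿ×2ⁿ complex matrix with tr(O) = 0. Define 𝒞⁽ⁱᵛ⁾ = Σ_{x,y,z ∈ {0,1}ⁿ} |x y z⟩( ⟨x y z| + ⟨z x y| + ⟨y z x| + ⟨y x z| + ⟨x z y| + ⟨z y x| ), a matrix indexed by triples of bit strings. Then | tr( 𝒞⁽ⁱᵛ⁾ (ρ ⊗ O ⊗ O) ) | ≤ 3 tr(O²). -/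
open Finset Matrix
open scoped ComplexOrder

/-- Bit strings of length `n`. -/
abbrev Bits (n : ℕ) := Fin n → Fin 2

/-- Triples of bit strings. -/
abbrev Bits3 (n : ℕ) := Bits n × Bits n × Bits n

/-- The standard basis vector `|a b c⟩` of `ℂ^{({0,1}ⁿ)³}`. -/
def ket3 {n : ℕ} (a b c : Bits n) : Bits3 n → ℂ :=
  fun p => if p = (a, b, c) then 1 else 0

/-- The Kronecker product `P ⊗ Q ⊗ R`, a matrix indexed by triples of bit strings. -/
def kron3 {ι : Type*} (P Q R : Matrix ι ι ℂ) : Matrix (ι × ι × ι) (ι × ι × ι) ℂ :=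
  Matrix.of fun p q => P p.1 q.1 * Q p.2.1 q.2.1 * R p.2.2 q.2.2

/-- The matrix `𝒞⁽ⁱᵛ⁾ = Σ_{x,y,z} |xyz⟩(⟨xyz|+⟨zxy|+⟨yzx|+⟨yxz|+⟨xzy|+⟨zyx|)`. -/
noncomputable def Civ (n : ℕ) : Matrix (Bits3 n) (Bits3 n) ℂ :=
  ∑ x : Bits n, ∑ y : Bits n, ∑ z : Bits n,
    Matrix.vecMulVec (ket3 x y z)
      (ket3 x y z + ket3 z x y + ket3 y z x + ket3 y x z + ket3 x z y + ket3 z y x)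

/-! ### Auxiliary lemmas -/

section Aux

lemma vecMulVec_add_right' {ι : Type*} (u v w : ι → ℂ) :
    vecMulVec u (v + w) = vecMulVec u v + vecMulVec u w := by
  ext i j; simp [vecMulVec_apply, mul_add]

lemma sum3_rot' {ι M : Type*} [Fintype ι] [AddCommMonoid M] (f : ι → ι → ι → M) :
    ∑ x : ι, ∑ y, ∑ z, f x y z = ∑ y : ι, ∑ z, ∑ x, f x y z := by
  rw [Finset.sum_comm]
  exact Finset.sum_congr rfl fun y _ => Finset.sum_comm

variable {ι : Type*} [Fintype ι]

lemma trace_eq' (P : Matrix ι ι ℂ) : P.trace = ∑ i : ι, P i i := by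
  simp [Matrix.trace, Matrix.diag]

lemma trace2' (P Q : Matrix ι ι ℂ) : (P * Q).trace = ∑ i : ι, ∑ j, P i j * Q j i := by
  simp [Matrix.trace, Matrix.diag, Matrix.mul_apply]

lemma trace3' (P Q R : Matrix ι ι ℂ) :
    (P * Q * R).trace = ∑ i : ι, ∑ j, ∑ k, P i k * Q k j * R j i := by
  simp [Matrix.trace, Matrix.diag, Matrix.mul_apply, Finset.sum_mul]

lemma sum_mul_sum3' (f : ι → ι → ℂ) (g : ι → ℂ) :
    (∑ i : ι, ∑ j, f i j) * (∑ k : ι, g k) = ∑ i : ι, ∑ j, ∑ k, f i j * g k := by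
  rw [Finset.sum_mul]
  exact Finset.sum_congr rfl fun i _ => by
    rw [Finset.sum_mul]
    exact Finset.sum_congr rfl fun j _ => Finset.mul_sum _ _ _

lemma sum_mul_sum3'' (g : ι → ℂ) (f : ι → ι → ℂ) :
    (∑ k : ι, g k) * (∑ i : ι, ∑ j, f i j) = ∑ k : ι, ∑ i, ∑ j, g k * f i j := by
  rw [Finset.sum_mul]
  exact Finset.sum_congr rfl fun k _ => by
    rw [Finset.mul_sum]
    exact Finset.sum_congr rfl fun i _ => Finset.mul_sum _ _ _

lemma sum3_congr' {f g : ι → ι → ι → ℂ} (h : ∀ a b c, f a b c = g a b c) :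
    ∑ x : ι, ∑ y, ∑ z, f x y z = ∑ x : ι, ∑ y, ∑ z, g x y z :=
  Finset.sum_congr rfl fun a _ => Finset.sum_congr rfl fun b _ =>
    Finset.sum_congr rfl fun c _ => h a b c

lemma L1' (P Q R : Matrix ι ι ℂ) :
    ∑ x : ι, ∑ y, ∑ z, P x x * Q y y * R z z = P.trace * Q.trace * R.trace := by
  rw [trace_eq', trace_eq', trace_eq', Finset.sum_mul, Finset.sum_mul]
  refine Finset.sum_congr rfl fun x _ => ?_
  simp only [Finset.mul_sum, Finset.sum_mul]
  rw [Finset.sum_comm]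

lemma L2' (P Q R : Matrix ι ι ℂ) :
    ∑ x : ι, ∑ y, ∑ z, P z x * Q x y * R y z = (P * Q * R).trace := by
  rw [trace3', sum3_rot', sum3_rot']
  exact Finset.sum_congr rfl fun z _ => Finset.sum_comm

lemma L3' (P Q R : Matrix ι ι ℂ) :
    ∑ x : ι, ∑ y, ∑ z, P y x * Q z y * R x z = (P * R * Q).trace := by
  rw [trace3', sum3_rot']
  exact sum3_congr' fun y z x => by ring

lemma L4' (P Q R : Matrix ι ι ℂ) :
    ∑ x : ι, ∑ y, ∑ z, P y x * Q x y * R z z = (P * Q).trace * R.trace := by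
  rw [trace2', trace_eq', sum_mul_sum3']
  exact Finset.sum_comm

lemma L5' (P Q R : Matrix ι ι ℂ) :
    ∑ x : ι, ∑ y, ∑ z, P x x * Q z y * R y z = P.trace * (Q * R).trace := by
  rw [trace_eq', trace2', sum_mul_sum3'']
  refine Finset.sum_congr rfl fun x _ => ?_
  rw [Finset.sum_comm]
  exact Finset.sum_congr rfl fun z _ => Finset.sum_congr rfl fun y _ => by ring

lemma L6' (P Q R : Matrix ι ι ℂ) :
    ∑ x : ι, ∑ y, ∑ z, P z x * Q y y * R x z = (P * R).trace * Q.trace := by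
  rw [trace2', trace_eq', sum_mul_sum3', sum3_rot', sum3_rot']
  exact sum3_congr' fun z x y => by ring

variable [DecidableEq ι]

lemma diag_nonneg' {M : Matrix ι ι ℂ} (hM : M.PosSemidef) (i : ι) : 0 ≤ M i i := by
  exact hM.diag_nonneg

lemma trace_psd_mul' {A B : Matrix ι ι ℂ} (hA : A.PosSemidef) (hB : B.PosSemidef) :
    0 ≤ (A * B).trace ∧ (A * B).trace ≤ A.trace * B.trace := by
  classical
  set U : Matrix ι ι ℂ := (hA.1.eigenvectorUnitary : Matrix ι ι ℂ) with hU
  set D : Matrix ι ι ℂ := Matrix.diagonal (RCLike.ofReal ∘ hA.1.eigenvalues) with hD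
  set C : Matrix ι ι ℂ := Uᴴ * B * U with hC
  have hCpsd : C.PosSemidef := hB.conjTranspose_mul_mul_same U
  have hUU : U * Uᴴ = 1 := by
    simpa [Matrix.star_eq_conjTranspose] using
      Matrix.mem_unitaryGroup_iff.mp hA.1.eigenvectorUnitary.2
  have hUU' : Uᴴ * U = 1 := by
    simpa [Matrix.star_eq_conjTranspose] using
      Matrix.mem_unitaryGroup_iff'.mp hA.1.eigenvectorUnitary.2
  have hspec : A = U * D * Uᴴ := by
    exact hA.1.spectral_theorem
  have htrAB : (A * B).trace = (D * C).trace := by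
    rw [hspec, Matrix.mul_assoc (U * D) Uᴴ B, Matrix.trace_mul_comm (U * D) (Uᴴ * B),
      Matrix.trace_mul_comm D C, hC, Matrix.mul_assoc Uᴴ B U,
      Matrix.mul_assoc Uᴴ (B * U) D]
    simp only [Matrix.mul_assoc]
  have htrC : C.trace = B.trace := by
    rw [hC, Matrix.trace_mul_cycle, hUU, Matrix.one_mul]
  have htrD : D.trace = A.trace := by
    rw [hspec, Matrix.trace_mul_cycle, hUU', Matrix.one_mul]
  have hDC : (D * C).trace = ∑ i : ι, (hA.1.eigenvalues i : ℂ) * C i i := by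
    rw [trace_eq']
    exact Finset.sum_congr rfl fun i _ => by
      simp [Matrix.mul_apply, hD, Matrix.diagonal_apply, ite_mul, Finset.sum_ite_eq]
  have hd : ∀ i, (0:ℂ) ≤ (hA.1.eigenvalues i : ℂ) := fun i =>
    Complex.zero_le_real.mpr (hA.eigenvalues_nonneg i)
  have hCi : ∀ i, 0 ≤ C i i := diag_nonneg' hCpsd
  have hCle : ∀ i, C i i ≤ B.trace := by
    intro i
    rw [← htrC, trace_eq']
    exact Finset.single_le_sum (fun j _ => hCi j) (Finset.mem_univ i)
  constructor
  · rw [htrAB, hDC]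
    exact Finset.sum_nonneg fun i _ => mul_nonneg (hd i) (hCi i)
  · rw [htrAB, hDC, ← htrD, trace_eq']
    have : ∑ i : ι, D i i = ∑ i : ι, (hA.1.eigenvalues i : ℂ) := by
      simp [hD, Matrix.diagonal_apply]
    rw [this, Finset.sum_mul]
    exact Finset.sum_le_sum fun i _ => mul_le_mul_of_nonneg_left (hCle i) (hd i)

end Aux

lemma trace_ketvv {n : ℕ} (x y z a b c : Bits n) (M : Matrix (Bits3 n) (Bits3 n) ℂ) :
    (vecMulVec (ket3 x y z) (ket3 a b c) * M).trace = M (a,b,c) (x,y,z) := by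
  classical
  simp [Matrix.trace, Matrix.diag, Matrix.mul_apply, vecMulVec_apply, ket3, ite_mul, mul_ite]

lemma trace_Civ_kron {n : ℕ} (P Q R : Matrix (Bits n) (Bits n) ℂ) :
    (Civ n * kron3 P Q R).trace
      = P.trace * Q.trace * R.trace + (P * Q * R).trace + (P * R * Q).trace
        + (P * Q).trace * R.trace + P.trace * (Q * R).trace + (P * R).trace * Q.trace := by
  rw [Civ]
  simp only [Finset.sum_mul, Matrix.trace_sum, vecMulVec_add_right', Matrix.add_mul,
    Matrix.trace_add, trace_ketvv]
  simp only [kron3, Matrix.of_apply]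
  simp only [Finset.sum_add_distrib]
  rw [L1', L2', L3', L4', L5', L6']

/-- `|tr(𝒞⁽ⁱᵛ⁾ (ρ ⊗ O ⊗ O))| ≤ 3 tr(O²)`. -/
theorem Civ_bound (n : ℕ) (hn : 1 ≤ n)
    (ρ O : Matrix (Bits n) (Bits n) ℂ)
    (hρ : ρ.PosSemidef) (hρtr : ρ.trace = 1)
    (hO : O.IsHermitian) (hOtr : O.trace = 0) :
    ‖(Civ n * kron3 ρ O O).trace‖ ≤ 3 * ((O * O).trace).re := by
  classical
  have hOO : (O * O).PosSemidef := by
    have h := Matrix.posSemidef_conjTranspose_mul_self O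
    rwa [show Oᴴ = O from hO] at h
  set t : ℂ := (ρ * (O * O)).trace with ht
  set s : ℂ := (O * O).trace with hs
  obtain ⟨ht0, hts⟩ := trace_psd_mul' hρ hOO
  rw [← ht, hρtr, one_mul, ← hs] at hts
  rw [← ht] at ht0
  have hs0 : (0:ℂ) ≤ s := by
    rw [hs, trace_eq']
    exact Finset.sum_nonneg fun i _ => diag_nonneg' hOO i
  have hv : (Civ n * kron3 ρ O O).trace = 2 * t + s := by
    rw [trace_Civ_kron, hρtr, hOtr, ht, hs, ← Matrix.mul_assoc]
    ring
  have hv0 : (0:ℂ) ≤ 2 * t + s := by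
    have h2 : (0:ℂ) ≤ 2 * t := mul_nonneg (by norm_num) ht0
    exact add_nonneg h2 hs0
  have hv3 : 2 * t + s ≤ 3 * s := by
    have h2 : 2 * t ≤ 2 * s := mul_le_mul_of_nonneg_left hts (by norm_num)
    calc 2 * t + s ≤ 2 * s + s := add_le_add_left h2 s
      _ = 3 * s := by ring
  rw [hv]
  have him : (2 * t + s).im = 0 ∧ 0 ≤ (2 * t + s).re := by
    have := (Complex.le_def.mp hv0)
    exact ⟨this.2.symm, this.1⟩
  have heq : (2 * t + s : ℂ) = (((2 * t + s).re : ℝ) : ℂ) := by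
    apply Complex.ext <;> simp [him.1]
  have habs : ‖2 * t + s‖ = (2 * t + s).re := by
    conv_lhs => rw [heq]
    rw [Complex.norm_real, Real.norm_eq_abs]
    exact abs_of_nonneg him.2
  rw [habs]
  have hre : (2 * t + s).re ≤ (3 * s).re := (Complex.le_def.mp hv3).1
  have h3s : (3 * s).re = 3 * s.re := by
    simp [Complex.mul_re]
  calc (2 * t + s).re ≤ (3 * s).re := hre
    _ = 3 * s.re := h3s
    _ = 3 * ((O * O).trace).re := by rw [hs]
end

section
/- Let n ≥ 1. Define the ESPOVM frame operator as the 4ⁿ×4ⁿ matrix (indexed by pairs of bit strings) F_es = (2ⁿ/|𝒜ₙ|) Σ_{A ∈ 𝒜ₙ} v_A v_A†, where v_A = φ^{eq}_A ⊗ conj(φ^{eq}_A). Then (1) F_es = (1/2ⁿ) ( I + Σ_{x ≠ y ∈ {0,1}ⁿ} |x x⟩⟨y y| ), and (2) for any two distinct bit strings z₁ ≠ z₂, F_es annihilates the vector e_{(z₁,z₁)} − e_{(z₂,z₂)}; in particular F_es is not invertible, so the ESPOVM alone is not informationally complete. -/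
open Finset Matrix

open Classical in
/-- The index set `𝒜ₙ`: symmetric `n × n` matrices with diagonal entries in `{0,1,2,3}`
and off-diagonal entries in `{0,1}` (encoded inside `Fin 4`). -/
noncomputable def An (n : ℕ) : Finset (Matrix (Fin n) (Fin n) (Fin 4)) :=
  Finset.univ.filter fun A => (∀ i j, A i j = A j i) ∧ ∀ i j, i ≠ j → (A i j : ℕ) < 2

/-- The quadratic form `xᵀ A x`, computed in `ℤ` (here in `ℕ`). -/
def quadA {n : ℕ} (A : Matrix (Fin n) (Fin n) (Fin 4)) (x : Bits n) : ℕ :=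
  ∑ i, ∑ j, (A i j : ℕ) * (x i : ℕ) * (x j : ℕ)

/-- The complex equatorial stabilizer state `φ^{eq}_A`. -/
noncomputable def phiEq {n : ℕ} (A : Matrix (Fin n) (Fin n) (Fin 4)) (x : Bits n) : ℂ :=
  Complex.I ^ quadA A x / (Real.sqrt (2 ^ n) : ℂ)

/-- The vectorization `v_A = φ^{eq}_A ⊗ conj(φ^{eq}_A)` of the projector onto `φ^{eq}_A`. -/
noncomputable def vEq {n : ℕ} (A : Matrix (Fin n) (Fin n) (Fin 4)) :
    Bits n × Bits n → ℂ :=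
  fun p => phiEq A p.1 * (starRingEnd ℂ) (phiEq A p.2)

/-- The ESPOVM frame operator `F_es = (2ⁿ/|𝒜ₙ|) Σ_{A ∈ 𝒜ₙ} v_A v_A†`. -/
noncomputable def Fes (n : ℕ) : Matrix (Bits n × Bits n) (Bits n × Bits n) ℂ :=
  ((2 : ℂ) ^ n / ((An n).card : ℂ)) •
    ∑ A ∈ An n, Matrix.vecMulVec (vEq A) (star (vEq A))

/-- The standard basis vector `e_{(x,y)}` of `ℂ^{{0,1}ⁿ×{0,1}ⁿ}`. -/
def ePair {n : ℕ} (x y : Bits n) : Bits n × Bits n → ℂ :=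
  fun p => if p = (x, y) then 1 else 0

namespace Espovm

variable {n : ℕ}

/-- Upper triangular index pairs. -/
abbrev UP (n : ℕ) := {p : Fin n × Fin n // p.1 < p.2}

/-- Parametrization of `An n`. -/
abbrev Param (n : ℕ) := (Fin n → Fin 4) × (UP n → Fin 2)

def toMat (b : Param n) : Matrix (Fin n) (Fin n) (Fin 4) := fun i j =>
  if h : i < j then Fin.castLE (by norm_num) (b.2 ⟨(i, j), h⟩)
  else if h' : j < i then Fin.castLE (by norm_num) (b.2 ⟨(j, i), h'⟩)
  else b.1 i

def fromMat (A : Matrix (Fin n) (Fin n) (Fin 4)) : Param n :=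
  (fun i => A i i, fun p => ⟨(A p.1.1 p.1.2 : ℕ) % 2, Nat.mod_lt _ (by norm_num)⟩)

lemma toMat_diag (b : Param n) (i : Fin n) : toMat b i i = b.1 i := by
  simp [toMat]

lemma toMat_lt (b : Param n) {i j : Fin n} (h : i < j) :
    toMat b i j = Fin.castLE (by norm_num) (b.2 ⟨(i, j), h⟩) := by
  simp [toMat, h]

lemma toMat_gt (b : Param n) {i j : Fin n} (h : j < i) :
    toMat b i j = Fin.castLE (by norm_num) (b.2 ⟨(j, i), h⟩) := by
  have h2 : ¬ i < j := by omega
  simp [toMat, h, h2]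

lemma toMat_mem (b : Param n) : toMat b ∈ An n := by
  simp only [An, Finset.mem_filter, Finset.mem_univ, true_and]
  constructor
  · intro i j
    rcases lt_trichotomy i j with h | h | h
    · rw [toMat_lt b h, toMat_gt b h]
    · subst h; rfl
    · rw [toMat_gt b h, toMat_lt b h]
  · intro i j hij
    rcases lt_or_gt_of_ne hij with h | h
    · rw [toMat_lt b h]; exact (b.2 ⟨(i, j), h⟩).isLt
    · rw [toMat_gt b h]; exact (b.2 ⟨(j, i), h⟩).isLt

lemma toMat_fromMat {A : Matrix (Fin n) (Fin n) (Fin 4)} (hA : A ∈ An n) :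
    toMat (fromMat A) = A := by
  simp only [An, Finset.mem_filter, Finset.mem_univ, true_and] at hA
  obtain ⟨hsymm, hlt⟩ := hA
  funext i j
  rcases lt_trichotomy i j with h | h | h
  · rw [toMat_lt _ h]
    have h2 : (A i j : ℕ) < 2 := hlt i j (ne_of_lt h)
    apply Fin.ext
    simp [fromMat, Nat.mod_eq_of_lt h2]
  · subst h; rw [toMat_diag]; rfl
  · rw [toMat_gt _ h]
    have h2 : (A j i : ℕ) < 2 := hlt j i (ne_of_lt h)
    apply Fin.ext
    simp [fromMat, Nat.mod_eq_of_lt h2, hsymm i j]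

lemma fromMat_toMat (b : Param n) : fromMat (toMat b) = b := by
  obtain ⟨d, u⟩ := b
  refine Prod.ext (funext fun i => ?_) (funext fun p => ?_)
  · simp [fromMat, toMat_diag]
  · obtain ⟨⟨i, j⟩, hij⟩ := p
    apply Fin.ext
    simp [fromMat, toMat_lt _ hij, Nat.mod_eq_of_lt (u ⟨(i, j), hij⟩).isLt]

lemma sum_An (g : Matrix (Fin n) (Fin n) (Fin 4) → ℂ) :
    ∑ A ∈ An n, g A = ∑ b : Param n, g (toMat b) := by
  refine Finset.sum_bij' (fun A _ => fromMat A) (fun b _ => toMat b)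
    (fun A hA => Finset.mem_univ _) (fun b _ => toMat_mem b)
    (fun A hA => toMat_fromMat hA) (fun b _ => fromMat_toMat b)
    (fun A hA => by rw [toMat_fromMat hA])

lemma card_An : ((An n).card : ℂ) = (4 : ℂ) ^ n * 2 ^ (Fintype.card (UP n)) := by
  have h := sum_An (n := n) (fun _ => (1 : ℂ))
  simp only [Finset.sum_const, nsmul_eq_mul, mul_one, Finset.card_univ] at h
  rw [h]
  have : Fintype.card (Param n) = 4 ^ n * 2 ^ (Fintype.card (UP n)) := by
    rw [Fintype.card_prod, Fintype.card_fun, Fintype.card_fun]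
    simp
  rw [this]
  push_cast
  ring

/-- The weight function. -/
def wgt (x y x' y' : Bits n) (i j : Fin n) : ℕ :=
  (x i : ℕ) * (x j : ℕ) + (y' i : ℕ) * (y' j : ℕ)
    + 3 * ((y i : ℕ) * (y j : ℕ)) + 3 * ((x' i : ℕ) * (x' j : ℕ))

lemma wgt_symm (x y x' y' : Bits n) (i j : Fin n) :
    wgt x y x' y' i j = wgt x y x' y' j i := by
  simp only [wgt]; ring

lemma quad_exp (A : Matrix (Fin n) (Fin n) (Fin 4)) (x y x' y' : Bits n) :
    quadA A x + 3 * quadA A y + 3 * quadA A x' + quadA A y'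
      = ∑ i, ∑ j, (A i j : ℕ) * wgt x y x' y' i j := by
  simp only [quadA, wgt, Finset.mul_sum, ← Finset.sum_add_distrib]
  refine Finset.sum_congr rfl fun i _ => Finset.sum_congr rfl fun j _ => by ring

lemma vEq_mul_star (A : Matrix (Fin n) (Fin n) (Fin 4)) (x y x' y' : Bits n) :
    vEq A (x, y) * (starRingEnd ℂ) (vEq A (x', y'))
      = Complex.I ^ (quadA A x + 3 * quadA A y + 3 * quadA A x' + quadA A y') / (4 : ℂ) ^ n := by
  have hc : ((Real.sqrt (2 ^ n) : ℂ)) ^ 4 = (4 : ℂ) ^ n := by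
    rw [← Complex.ofReal_pow]
    have : (Real.sqrt (2 ^ n)) ^ 4 = (4 : ℝ) ^ n := by
      rw [show (4 : ℕ) = 2 * 2 from rfl, pow_mul,
        Real.sq_sqrt (by positivity : (0:ℝ) ≤ (2:ℝ) ^ n)]
      rw [← pow_mul, mul_comm n 2, pow_mul]; norm_num
    rw [this]; push_cast; ring
  have hconjI : (starRingEnd ℂ) Complex.I = Complex.I ^ 3 := by
    rw [Complex.conj_I, pow_succ, Complex.I_sq]; ring
  simp only [vEq, phiEq, _root_.map_mul, map_div₀, map_pow, Complex.conj_ofReal, Complex.conj_conj,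
    hconjI, ← pow_mul]
  rw [div_mul_div_comm, div_mul_div_comm, div_mul_div_comm]
  rw [← pow_add, ← pow_add, ← pow_add]
  have h4 : (Real.sqrt (2^n) : ℂ) * (Real.sqrt (2^n) : ℂ) * ((Real.sqrt (2^n) : ℂ) * (Real.sqrt (2^n) : ℂ)) = ((Real.sqrt (2 ^ n) : ℂ)) ^ 4 := by ring
  rw [h4, hc]
  congr 1
  rw [show quadA A x + 3 * quadA A y + (3 * quadA A x' + 3 * (3 * quadA A y'))
      = (quadA A x + 3 * quadA A y + 3 * quadA A x' + quadA A y') + 4 * (2 * quadA A y') by ring,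
    pow_add, pow_mul, Complex.I_pow_four, one_pow, mul_one]

lemma prod_split (g : Fin n → Fin n → ℂ) :
    ∏ i, ∏ j, g i j
      = (∏ i, g i i) * ∏ p : UP n, (g p.1.1 p.1.2 * g p.1.2 p.1.1) := by
  classical
  have h1 : ∏ i, ∏ j, g i j = ∏ p : Fin n × Fin n, g p.1 p.2 := by
    rw [← Finset.univ_product_univ, Finset.prod_product']
  rw [h1, ← Finset.prod_filter_mul_prod_filter_not Finset.univ
    (fun p : Fin n × Fin n => p.1 = p.2)]
  congr 1
  · refine Finset.prod_bij' (fun p _ => p.1) (fun i _ => (i, i)) ?_ ?_ ?_ ?_ ?_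
    · intro a _; exact Finset.mem_univ _
    · intro a _; simp
    · intro a ha; simp only [Finset.mem_filter] at ha
      exact Prod.ext rfl ha.2
    · intro a _; rfl
    · intro a ha; simp only [Finset.mem_filter] at ha
      rw [← ha.2]
  · rw [← Finset.prod_filter_mul_prod_filter_not
      (Finset.univ.filter fun p : Fin n × Fin n => ¬ p.1 = p.2)
      (fun p : Fin n × Fin n => p.1 < p.2)]
    have hS1 : ((Finset.univ.filter fun p : Fin n × Fin n => ¬ p.1 = p.2).filter
        fun p : Fin n × Fin n => p.1 < p.2)
        = Finset.univ.filter fun p : Fin n × Fin n => p.1 < p.2 := by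
      rw [Finset.filter_filter]
      refine Finset.filter_congr fun p _ => ?_
      constructor
      · exact fun h => h.2
      · exact fun h => ⟨ne_of_lt h, h⟩
    have hS2 : ∏ p ∈ ((Finset.univ.filter fun p : Fin n × Fin n => ¬ p.1 = p.2).filter
        fun p : Fin n × Fin n => ¬ p.1 < p.2), g p.1 p.2
        = ∏ p ∈ Finset.univ.filter (fun p : Fin n × Fin n => p.1 < p.2), g p.2 p.1 := by
      refine Finset.prod_bij' (fun p _ => Prod.swap p) (fun p _ => Prod.swap p) ?_ ?_ ?_ ?_ ?_
      · intro a ha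
        simp only [Finset.mem_filter, Finset.mem_univ, true_and, Prod.fst_swap,
          Prod.snd_swap] at ha ⊢
        have h1 : a.2 ≠ a.1 := fun h => ha.1 h.symm
        rcases lt_or_gt_of_ne h1 with h | h
        · exact h
        · exact absurd h ha.2
      · intro a ha
        simp only [Finset.mem_filter, Finset.mem_univ, true_and, Prod.fst_swap,
          Prod.snd_swap] at ha ⊢
        exact ⟨fun h => absurd h.symm (ne_of_lt ha), by omega⟩
      · intro a _; rfl
      · intro a _; rfl
      · intro a _; rfl
    rw [hS1, hS2, ← Finset.prod_mul_distrib]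
    rw [Finset.prod_subtype (p := fun q : Fin n × Fin n => q.1 < q.2)
      (Finset.univ.filter fun p : Fin n × Fin n => p.1 < p.2)
      (fun q => by simp) (fun q : Fin n × Fin n => g q.1 q.2 * g q.2 q.1)]

/-- Diagonal factor. -/
noncomputable def Dfac (x y x' y' : Bits n) (i : Fin n) : ℂ :=
  ∑ a : Fin 4, (Complex.I ^ wgt x y x' y' i i) ^ (a : ℕ)

/-- Off-diagonal factor. -/
noncomputable def Efac (x y x' y' : Bits n) (p : UP n) : ℂ :=
  ∑ a : Fin 2, (Complex.I ^ (wgt x y x' y' p.1.1 p.1.2 + wgt x y x' y' p.1.2 p.1.1)) ^ (a : ℕ)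

lemma gauss (x y x' y' : Bits n) :
    ∑ A ∈ An n, (Complex.I : ℂ) ^ (∑ i, ∑ j, (A i j : ℕ) * wgt x y x' y' i j)
      = (∏ i, Dfac x y x' y' i) * ∏ p : UP n, Efac x y x' y' p := by
  classical
  rw [sum_An]
  have key : ∀ b : Param n,
      (Complex.I : ℂ) ^ (∑ i, ∑ j, (toMat b i j : ℕ) * wgt x y x' y' i j)
        = (∏ i, (Complex.I ^ wgt x y x' y' i i) ^ ((b.1 i : ℕ))) *
          ∏ p : UP n, (Complex.I ^ (wgt x y x' y' p.1.1 p.1.2 + wgt x y x' y' p.1.2 p.1.1))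
            ^ ((b.2 p : ℕ)) := by
    intro b
    have e1 : (Complex.I : ℂ) ^ (∑ i, ∑ j, (toMat b i j : ℕ) * wgt x y x' y' i j)
        = ∏ i, ∏ j, (Complex.I ^ wgt x y x' y' i j) ^ ((toMat b i j : ℕ)) := by
      rw [← Finset.prod_pow_eq_pow_sum]
      refine Finset.prod_congr rfl fun i _ => ?_
      rw [← Finset.prod_pow_eq_pow_sum]
      refine Finset.prod_congr rfl fun j _ => ?_
      rw [← pow_mul, mul_comm]
    rw [e1, prod_split]
    congr 1
    · refine Finset.prod_congr rfl fun i _ => ?_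
      rw [toMat_diag]
    · refine Finset.prod_congr rfl fun p _ => ?_
      obtain ⟨⟨i, j⟩, hij⟩ := p
      have hvl : ((toMat b i j : ℕ)) = ((b.2 ⟨(i, j), hij⟩ : ℕ)) := by
        rw [toMat_lt b hij]; rfl
      have hvg : ((toMat b j i : ℕ)) = ((b.2 ⟨(i, j), hij⟩ : ℕ)) := by
        rw [toMat_gt b hij]; rfl
      simp only [hvl, hvg]
      rw [← mul_pow, ← pow_add]
  simp only [key]
  rw [Fintype.sum_prod_type]
  have : ∀ d : Fin n → Fin 4,
      ∑ u : UP n → Fin 2,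
        (∏ i, (Complex.I ^ wgt x y x' y' i i) ^ ((d i : ℕ))) *
          ∏ p : UP n, (Complex.I ^ (wgt x y x' y' p.1.1 p.1.2 + wgt x y x' y' p.1.2 p.1.1))
            ^ ((u p : ℕ))
        = (∏ i, (Complex.I ^ wgt x y x' y' i i) ^ ((d i : ℕ))) *
          ∑ u : UP n → Fin 2, ∏ p : UP n,
            (Complex.I ^ (wgt x y x' y' p.1.1 p.1.2 + wgt x y x' y' p.1.2 p.1.1)) ^ ((u p : ℕ)) := by
    intro d; rw [Finset.mul_sum]
  simp only [this]
  rw [← Finset.sum_mul]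
  congr 1
  · simp only [Dfac]
    exact (Fintype.prod_sum fun i (a : Fin 4) => (Complex.I ^ wgt x y x' y' i i) ^ (a : ℕ)).symm
  · simp only [Efac]
    exact (Fintype.prod_sum fun (p : UP n) (a : Fin 2) =>
      (Complex.I ^ (wgt x y x' y' p.1.1 p.1.2 + wgt x y x' y' p.1.2 p.1.1)) ^ (a : ℕ)).symm

lemma I_pow_mod (m : ℕ) : Complex.I ^ m = Complex.I ^ (m % 4) := by
  conv_lhs => rw [← Nat.div_add_mod m 4]
  rw [pow_add, pow_mul, Complex.I_pow_four, one_pow, one_mul]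

lemma geom4 (z : ℂ) (hz : z ^ 4 = 1) :
    (1 : ℂ) + z + z ^ 2 + z ^ 3 = if z = 1 then 4 else 0 := by
  by_cases h : z = 1
  · rw [if_pos h, h]; norm_num
  · rw [if_neg h]
    have h2 : (z - 1) * (1 + z + z ^ 2 + z ^ 3) = z ^ 4 - 1 := by ring
    rw [hz, sub_self] at h2
    rcases mul_eq_zero.mp h2 with h3 | h3
    · exact absurd (sub_eq_zero.mp h3) h
    · exact h3

lemma fin2_mul_self (a : Fin 2) : (a : ℕ) * (a : ℕ) = (a : ℕ) := by
  fin_cases a <;> rfl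

lemma wgt_diag (x y x' y' : Bits n) (i : Fin n) :
    wgt x y x' y' i i = (x i : ℕ) + (y' i : ℕ) + 3 * (y i : ℕ) + 3 * (x' i : ℕ) := by
  simp only [wgt, fin2_mul_self]

lemma Dfac_eq (x y x' y' : Bits n) (i : Fin n) :
    Dfac x y x' y' i
      = if (x i : ℕ) + (y' i : ℕ) = (y i : ℕ) + (x' i : ℕ) then 4 else 0 := by
  have hgeo : Dfac x y x' y' i = if Complex.I ^ wgt x y x' y' i i = 1 then 4 else 0 := by
    rw [Dfac, Fin.sum_univ_four]
    have : ∀ z : ℂ, z ^ ((0 : Fin 4) : ℕ) + z ^ ((1 : Fin 4) : ℕ) + z ^ ((2 : Fin 4) : ℕ)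
        + z ^ ((3 : Fin 4) : ℕ) = 1 + z + z ^ 2 + z ^ 3 := by
      intro z
      simp only [show ((0 : Fin 4) : ℕ) = 0 from rfl, show ((1 : Fin 4) : ℕ) = 1 from rfl,
        show ((2 : Fin 4) : ℕ) = 2 from rfl, show ((3 : Fin 4) : ℕ) = 3 from rfl,
        pow_zero, pow_one]
    rw [this]
    exact geom4 _ (by rw [← pow_mul, mul_comm, pow_mul, Complex.I_pow_four, one_pow])
  rw [hgeo]
  have hx := (x i).isLt
  have hy := (y i).isLt
  have hx' := (x' i).isLt
  have hy' := (y' i).isLt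
  by_cases hcond : (x i : ℕ) + (y' i : ℕ) = (y i : ℕ) + (x' i : ℕ)
  · have h0 : wgt x y x' y' i i % 4 = 0 := by rw [wgt_diag]; omega
    rw [if_pos hcond, if_pos (by rw [I_pow_mod, h0, pow_zero])]
  · have hne : Complex.I ^ wgt x y x' y' i i ≠ 1 := by
      rw [I_pow_mod]
      have h4 : wgt x y x' y' i i % 4 < 4 := Nat.mod_lt _ (by norm_num)
      have h0 : wgt x y x' y' i i % 4 ≠ 0 := by rw [wgt_diag]; omega
      set r := wgt x y x' y' i i % 4 with hr
      interval_cases r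
      · exact absurd rfl h0
      · intro h; rw [Complex.ext_iff] at h; simp at h
      · rw [Complex.I_sq]; intro h; norm_num at h
      · rw [pow_succ, Complex.I_sq]
        intro h
        rw [neg_one_mul] at h
        have : Complex.I = -1 := by linear_combination -h
        rw [Complex.ext_iff] at this
        simp at this
    rw [if_neg hcond, if_neg hne]

lemma Efac_eq (x y x' y' : Bits n) (p : UP n) :
    Efac x y x' y' p
      = if ((x p.1.1 : ℕ) * (x p.1.2 : ℕ) + (y p.1.1 : ℕ) * (y p.1.2 : ℕ)
          + (x' p.1.1 : ℕ) * (x' p.1.2 : ℕ) + (y' p.1.1 : ℕ) * (y' p.1.2 : ℕ)) % 2 = 0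
        then 2 else 0 := by
  obtain ⟨⟨i, j⟩, hij⟩ := p
  rw [Efac, Fin.sum_univ_two]
  simp only []
  have hww : wgt x y x' y' i j + wgt x y x' y' j i = 2 * wgt x y x' y' i j := by
    rw [wgt_symm x y x' y' j i]; ring
  rw [hww, pow_mul, Complex.I_sq]
  have h1 : ∀ z : ℂ, z ^ ((0 : Fin 2) : ℕ) + z ^ ((1 : Fin 2) : ℕ) = 1 + z := by
    intro z
    simp only [show ((0 : Fin 2) : ℕ) = 0 from rfl, show ((1 : Fin 2) : ℕ) = 1 from rfl,
      pow_zero, pow_one]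
  rw [h1]
  set t1 := (x i : ℕ) * (x j : ℕ) with ht1
  set t2 := (y i : ℕ) * (y j : ℕ) with ht2
  set t3 := (x' i : ℕ) * (x' j : ℕ) with ht3
  set t4 := (y' i : ℕ) * (y' j : ℕ) with ht4
  have hwg : wgt x y x' y' i j = t1 + t4 + 3 * t2 + 3 * t3 := rfl
  by_cases h : (t1 + t2 + t3 + t4) % 2 = 0
  · have heven : Even (wgt x y x' y' i j) := by
      rw [Nat.even_iff, hwg]; omega
    rw [if_pos h, heven.neg_one_pow]; norm_num
  · have hodd : Odd (wgt x y x' y' i j) := by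
      rw [Nat.odd_iff, hwg]; omega
    rw [if_neg h, hodd.neg_one_pow]; ring

lemma key1 : ∀ a b c d : Fin 2,
    (a : ℕ) ≠ (b : ℕ) → (a : ℕ) + (d : ℕ) = (b : ℕ) + (c : ℕ) → a = c ∧ b = d := by decide

lemma key2 : ∀ a b c d a' b' c' d' : Fin 2,
    (a : ℕ) ≠ (b : ℕ) → (a : ℕ) + (d : ℕ) = (b : ℕ) + (c : ℕ) →
    (a' : ℕ) + (d' : ℕ) = (b' : ℕ) + (c' : ℕ) →
    ((a : ℕ) * (a' : ℕ) + (b : ℕ) * (b' : ℕ) + (c : ℕ) * (c' : ℕ) + (d : ℕ) * (d' : ℕ)) % 2 = 0 →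
    a' = c' ∧ b' = d' := by decide

lemma combo (x y x' y' : Bits n) :
    ((∀ i, (x i : ℕ) + (y' i : ℕ) = (y i : ℕ) + (x' i : ℕ)) ∧
      ∀ p : UP n, ((x p.1.1 : ℕ) * (x p.1.2 : ℕ) + (y p.1.1 : ℕ) * (y p.1.2 : ℕ)
          + (x' p.1.1 : ℕ) * (x' p.1.2 : ℕ) + (y' p.1.1 : ℕ) * (y' p.1.2 : ℕ)) % 2 = 0)
    ↔ ((x = y ∧ x' = y') ∨ (x = x' ∧ y = y')) := by
  constructor
  · rintro ⟨h1, h2⟩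
    by_cases hxy : x = y
    · refine Or.inl ⟨hxy, funext fun i => ?_⟩
      subst hxy
      have := h1 i
      exact Fin.val_injective (by omega)
    · right
      obtain ⟨i0, hi0⟩ := Function.ne_iff.mp hxy
      have hv0 : (x i0 : ℕ) ≠ (y i0 : ℕ) := fun h => hi0 (Fin.val_injective h)
      have hkey : ∀ j : Fin n, x j = x' j ∧ y j = y' j := by
        intro j
        by_cases hj : j = i0
        · subst hj
          exact key1 _ _ _ _ hv0 (h1 j)
        · have hpar : ((x i0 : ℕ) * (x j : ℕ) + (y i0 : ℕ) * (y j : ℕ)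
              + (x' i0 : ℕ) * (x' j : ℕ) + (y' i0 : ℕ) * (y' j : ℕ)) % 2 = 0 := by
            rcases lt_or_gt_of_ne (Ne.symm hj) with h | h
            · exact h2 ⟨(i0, j), h⟩
            · have := h2 ⟨(j, i0), h⟩
              simp only [] at this
              rw [Nat.mul_comm ((x j : ℕ)) ((x i0 : ℕ)), Nat.mul_comm ((y j : ℕ)) ((y i0 : ℕ)),
                Nat.mul_comm ((x' j : ℕ)) ((x' i0 : ℕ)),
                Nat.mul_comm ((y' j : ℕ)) ((y' i0 : ℕ))] at this
              exact this
          exact key2 _ _ _ _ _ _ _ _ hv0 (h1 i0) (h1 j) hpar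
      exact ⟨funext fun j => (hkey j).1, funext fun j => (hkey j).2⟩
  · rintro (⟨h1, h2⟩ | ⟨h1, h2⟩) <;> subst h1 <;> subst h2
    · refine ⟨fun i => by omega, fun p => ?_⟩
      generalize (x p.1.1 : ℕ) * (x p.1.2 : ℕ) = a
      generalize (x' p.1.1 : ℕ) * (x' p.1.2 : ℕ) = b
      omega
    · refine ⟨fun i => by omega, fun p => ?_⟩
      generalize (x p.1.1 : ℕ) * (x p.1.2 : ℕ) = a
      generalize (y p.1.1 : ℕ) * (y p.1.2 : ℕ) = b
      omega

lemma Fes_apply (x y x' y' : Bits n) :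
    Fes n (x, y) (x', y')
      = if (x = y ∧ x' = y') ∨ (x = x' ∧ y = y') then ((2 : ℂ) ^ n)⁻¹ else 0 := by
  classical
  have hter : ∀ A ∈ An n, (Matrix.vecMulVec (vEq A) (star (vEq A))) (x, y) (x', y')
      = Complex.I ^ (∑ i, ∑ j, (A i j : ℕ) * wgt x y x' y' i j) / (4 : ℂ) ^ n := by
    intro A _
    rw [Matrix.vecMulVec_apply, Pi.star_apply,
      show (star (vEq A (x', y')) : ℂ) = (starRingEnd ℂ) (vEq A (x', y')) from rfl,
      vEq_mul_star, quad_exp]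
  rw [Fes, Matrix.smul_apply, Matrix.sum_apply, Finset.sum_congr rfl hter,
    ← Finset.sum_div, gauss, smul_eq_mul]
  by_cases hP : (x = y ∧ x' = y') ∨ (x = x' ∧ y = y')
  · rw [if_pos hP]
    have hD : ∀ i, Dfac x y x' y' i = 4 := fun i => by
      rw [Dfac_eq, if_pos (((combo x y x' y').mpr hP).1 i)]
    have hE : ∀ p : UP n, Efac x y x' y' p = 2 := fun p => by
      rw [Efac_eq, if_pos (((combo x y x' y').mpr hP).2 p)]
    simp only [hD, hE, Finset.prod_const, Finset.card_univ, Fintype.card_fin]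
    rw [card_An]
    rw [show (4 : ℂ) = 2 * 2 by norm_num, mul_pow]
    have h2 : (2 : ℂ) ≠ 0 := two_ne_zero
    field_simp
  · rw [if_neg hP]
    have hnc : ¬ ((∀ i, (x i : ℕ) + (y' i : ℕ) = (y i : ℕ) + (x' i : ℕ)) ∧
        ∀ p : UP n, ((x p.1.1 : ℕ) * (x p.1.2 : ℕ) + (y p.1.1 : ℕ) * (y p.1.2 : ℕ)
          + (x' p.1.1 : ℕ) * (x' p.1.2 : ℕ) + (y' p.1.1 : ℕ) * (y' p.1.2 : ℕ)) % 2 = 0) :=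
      fun h => hP ((combo x y x' y').mp h)
    rcases not_and_or.mp hnc with h | h
    · push_neg at h
      obtain ⟨i, hi⟩ := h
      have : Dfac x y x' y' i = 0 := by rw [Dfac_eq, if_neg hi]
      rw [Finset.prod_eq_zero (Finset.mem_univ i) this, zero_mul, zero_div, mul_zero]
    · push_neg at h
      obtain ⟨p, hp⟩ := h
      have : Efac x y x' y' p = 0 := by rw [Efac_eq, if_neg hp]
      rw [Finset.prod_eq_zero (Finset.mem_univ p) this, mul_zero, zero_div, mul_zero]

end Espovm

open Espovm

/-- (1) the explicit form of the ESPOVM frame operator,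
(2) it annihilates every `e_{(z₁,z₁)} − e_{(z₂,z₂)}` with `z₁ ≠ z₂`, and
(3) in particular it is not invertible (the ESPOVM alone is not informationally
complete). -/
theorem espovm_frame_operator (n : ℕ) (hn : 1 ≤ n) :
    (Fes n = ((2 : ℂ) ^ n)⁻¹ •
        ((1 : Matrix (Bits n × Bits n) (Bits n × Bits n) ℂ)
          + ∑ p ∈ Finset.univ.filter (fun p : Bits n × Bits n => p.1 ≠ p.2),
              Matrix.single (p.1, p.1) (p.2, p.2) (1 : ℂ)))
      ∧ (∀ z₁ z₂ : Bits n, z₁ ≠ z₂ → (Fes n) *ᵥ (ePair z₁ z₁ - ePair z₂ z₂) = 0)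
      ∧ ¬ IsUnit (Fes n) := by
  classical
  have h1 : Fes n = ((2 : ℂ) ^ n)⁻¹ •
      ((1 : Matrix (Bits n × Bits n) (Bits n × Bits n) ℂ)
        + ∑ p ∈ Finset.univ.filter (fun p : Bits n × Bits n => p.1 ≠ p.2),
            Matrix.single (p.1, p.1) (p.2, p.2) (1 : ℂ)) := by
    ext ⟨x, y⟩ ⟨x', y'⟩
    rw [Fes_apply, Matrix.smul_apply, Matrix.add_apply, Matrix.one_apply, Matrix.sum_apply]
    have hsum : ∑ p ∈ Finset.univ.filter (fun p : Bits n × Bits n => p.1 ≠ p.2),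
        Matrix.single (p.1, p.1) (p.2, p.2) (1 : ℂ) (x, y) (x', y')
        = if x = y ∧ x' = y' ∧ x ≠ x' then 1 else 0 := by
      have hterm : ∀ p : Bits n × Bits n,
          Matrix.single (p.1, p.1) (p.2, p.2) (1 : ℂ) (x, y) (x', y')
            = if (p.1, p.1) = ((x, y) : Bits n × Bits n)
                ∧ (p.2, p.2) = ((x', y') : Bits n × Bits n) then 1 else 0 := by
        intro p; rfl
      simp only [hterm]
      by_cases hc : x = y ∧ x' = y' ∧ x ≠ x'
      · rw [if_pos hc]
        rw [Finset.sum_eq_single ((x, x') : Bits n × Bits n)]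
        · rw [if_pos ⟨by rw [hc.1], by rw [hc.2.1]⟩]
        · intro b _ hb
          rw [if_neg]
          rintro ⟨hA, hB⟩
          exact hb (Prod.ext (Prod.ext_iff.mp hA).1 (Prod.ext_iff.mp hB).1)
        · intro hmem
          exfalso
          exact hmem (Finset.mem_filter.mpr ⟨Finset.mem_univ _, hc.2.2⟩)
      · rw [if_neg hc]
        refine Finset.sum_eq_zero fun p hp => ?_
        rw [if_neg]
        rintro ⟨hA, hB⟩
        have hp1 : p.1 = x := (Prod.ext_iff.mp hA).1
        have hp1' : p.1 = y := (Prod.ext_iff.mp hA).2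
        have hp2 : p.2 = x' := (Prod.ext_iff.mp hB).1
        have hp2' : p.2 = y' := (Prod.ext_iff.mp hB).2
        have hne : p.1 ≠ p.2 := (Finset.mem_filter.mp hp).2
        exact hc ⟨hp1' ▸ hp1.symm ▸ rfl, hp2' ▸ hp2.symm ▸ rfl,
          fun h => hne (by rw [hp1, hp2, h])⟩
    rw [hsum, smul_eq_mul]
    by_cases hd : (x, y) = ((x', y') : Bits n × Bits n)
    · have hx : x = x' := (Prod.ext_iff.mp hd).1
      have hy : y = y' := (Prod.ext_iff.mp hd).2
      rw [if_pos hd, if_pos (Or.inr ⟨hx, hy⟩), if_neg (fun h => h.2.2 hx), add_zero, mul_one]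
    · rw [if_neg hd]
      by_cases he : x = y ∧ x' = y'
      · have hxx : x ≠ x' := by
          intro h
          exact hd (Prod.ext h (by rw [← he.1, h]; exact he.2))
        rw [if_pos (show x = y ∧ x' = y' ∧ x ≠ x' from ⟨he.1, he.2, hxx⟩),
          if_pos (Or.inl he), zero_add, mul_one]
      · rw [if_neg (fun h : x = y ∧ x' = y' ∧ x ≠ x' => he ⟨h.1, h.2.1⟩), if_neg, add_zero,
          mul_zero]
        rintro (h | h)
        · exact he h
        · exact hd (Prod.ext h.1 h.2)
  have h2 : ∀ z₁ z₂ : Bits n, z₁ ≠ z₂ → (Fes n) *ᵥ (ePair z₁ z₁ - ePair z₂ z₂) = 0 := by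
    intro z₁ z₂ hz
    funext q
    obtain ⟨a, b⟩ := q
    have hentry : ∀ z : Bits n, Fes n (a, b) (z, z) = if a = b then ((2 : ℂ) ^ n)⁻¹ else 0 := by
      intro z
      rw [Fes_apply]
      congr 1
      refine propext ⟨?_, ?_⟩
      · rintro (⟨h, _⟩ | ⟨ha, hb⟩)
        · exact h
        · exact ha.trans hb.symm
      · intro h; exact Or.inl ⟨h, rfl⟩
    have hcol : ∀ z : Bits n, (fun p => Fes n (a, b) p) = fun p => Fes n (a, b) p := fun _ => rfl
    show (∑ p : Bits n × Bits n, Fes n (a, b) p * (ePair z₁ z₁ - ePair z₂ z₂) p) = 0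
    simp only [Pi.sub_apply, ePair, mul_sub]
    rw [Finset.sum_sub_distrib]
    have hone : ∀ z : Bits n,
        (∑ p : Bits n × Bits n, Fes n (a, b) p * (if p = ((z, z) : Bits n × Bits n) then (1:ℂ) else 0))
          = Fes n (a, b) (z, z) := by
      intro z
      rw [Finset.sum_eq_single ((z, z) : Bits n × Bits n)]
      · rw [if_pos rfl, mul_one]
      · intro p _ hp; rw [if_neg hp, mul_zero]
      · intro h; exact absurd (Finset.mem_univ _) h
    rw [hone z₁, hone z₂, hentry z₁, hentry z₂, sub_self]
  refine ⟨h1, h2, ?_⟩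
  intro hu
  obtain ⟨u, hu'⟩ := hu
  set z₁ : Bits n := fun _ => 0 with hz₁
  set z₂ : Bits n := fun _ => 1 with hz₂
  have hne : z₁ ≠ z₂ := by
    intro h
    have := congrFun h (⟨0, hn⟩ : Fin n)
    simp [hz₁, hz₂] at this
  have h0 := h2 z₁ z₂ hne
  have hv : (ePair z₁ z₁ - ePair z₂ z₂ : Bits n × Bits n → ℂ) = 0 := by
    calc ePair z₁ z₁ - ePair z₂ z₂
        = (1 : Matrix (Bits n × Bits n) (Bits n × Bits n) ℂ) *ᵥ (ePair z₁ z₁ - ePair z₂ z₂) := by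
          rw [Matrix.one_mulVec]
      _ = ((↑u⁻¹ : Matrix (Bits n × Bits n) (Bits n × Bits n) ℂ) * ↑u) *ᵥ
            (ePair z₁ z₁ - ePair z₂ z₂) := by rw [u.inv_mul]
      _ = (↑u⁻¹ : Matrix (Bits n × Bits n) (Bits n × Bits n) ℂ) *ᵥ
            ((↑u : Matrix (Bits n × Bits n) (Bits n × Bits n) ℂ) *ᵥ
              (ePair z₁ z₁ - ePair z₂ z₂)) := by rw [Matrix.mulVec_mulVec]
      _ = 0 := by rw [hu', h0, Matrix.mulVec_zero]
  have hc := congrFun hv (z₁, z₁)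
  have hzz : ((z₁, z₁) : Bits n × Bits n) ≠ (z₂, z₂) := by
    intro h
    exact hne (Prod.ext_iff.mp h).1
  simp [ePair, hzz] at hc
end
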